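/- For ε > 0 set β(ε) = (1 + 8ε²)^{1/4} and δ(ε)² = (β(ε)² − 1)/4. Then for a real number ρ, the quantity √(ε²/(1/2 + δ(ε)² + ε²)) · e^{ρ/(2β(ε)²)} lies strictly between 0 and 1 for every ε > 0 if and only if ρ ≤ 2. -/

import Mathlib

/-- β(ε) = (1 + 8ε²)^{1/4}. -/
noncomputable def βconst (ε : ℝ) : ℝ := (1 + 8 * ε ^ 2) ^ ((1 : ℝ) / 4)

/-- δ(ε)² = (β(ε)² − 1)/4. -/
noncomputable def δ2const (ε : ℝ) : ℝ := (βconst ε ^ 2 - 1) / 4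

lemma beta_pos (ε : ℝ) : 0 < βconst ε :=
  Real.rpow_pos_of_pos (by positivity) _

lemma beta_sq_sq (ε : ℝ) : (βconst ε ^ 2) ^ 2 = 1 + 8 * ε ^ 2 := by
  have hx : (0:ℝ) ≤ 1 + 8 * ε ^ 2 := by positivity
  have h4 : (βconst ε ^ 2) ^ 2 = βconst ε ^ (4:ℕ) := by ring
  rw [h4]
  unfold βconst
  rw [← Real.rpow_natCast ((1 + 8*ε^2) ^ ((1:ℝ)/4)) 4, ← Real.rpow_mul hx]
  norm_num

lemma log_aux : ∀ x ∈ Set.Ioo (0:ℝ) 1, 2 * x < Real.log (1 + x) - Real.log (1 - x) := by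
  set f : ℝ → ℝ := fun x => Real.log (1 + x) - Real.log (1 - x) - 2 * x with hf
  have hcont : ContinuousOn f (Set.Ico (0:ℝ) 1) := by
    apply ContinuousOn.sub
    apply ContinuousOn.sub
    · exact ((continuous_const.add continuous_id).continuousOn).log
        (fun y hy => by simp only [Set.mem_Ico] at hy; show (1:ℝ) + y ≠ 0; nlinarith [hy.1])
    · exact ((continuous_const.sub continuous_id).continuousOn).log
        (fun y hy => by simp only [Set.mem_Ico] at hy; show (1:ℝ) - y ≠ 0; nlinarith [hy.2])
    · exact (continuous_const.mul continuous_id).continuousOn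
  have hderiv : ∀ x ∈ Set.Ioo (0:ℝ) 1, 0 < deriv f x := by
    intro x hx
    obtain ⟨hx0, hx1⟩ := hx
    have h1 : HasDerivAt (fun y : ℝ => Real.log (1 + y)) (1 / (1 + x)) x := by
      have := (HasDerivAt.const_add 1 (hasDerivAt_id x)).log
        (by nlinarith : (1:ℝ) + x ≠ 0)
      simpa using this
    have h2 : HasDerivAt (fun y : ℝ => Real.log (1 - y)) (-1 / (1 - x)) x := by
      have := (HasDerivAt.const_sub 1 (hasDerivAt_id x)).log
        (by nlinarith : (1:ℝ) - x ≠ 0)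
      simpa using this
    have h3 : HasDerivAt (fun y : ℝ => 2 * y) 2 x := by
      simpa using (hasDerivAt_id x).const_mul 2
    have hfd : HasDerivAt f (1 / (1 + x) - -1 / (1 - x) - 2) x := (h1.sub h2).sub h3
    rw [hfd.deriv]
    have hD : 0 < (1 + x) * (1 - x) := by nlinarith
    have key : 1 / (1 + x) - -1 / (1 - x) - 2 = 2 * x ^ 2 / ((1 + x) * (1 - x)) := by
      have hp : (1:ℝ) + x ≠ 0 := by nlinarith
      have hm : (1:ℝ) - x ≠ 0 := by nlinarith
      rw [eq_div_iff (ne_of_gt hD)]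
      field_simp
      ring
    rw [key]
    exact div_pos (by positivity) hD
  have hmono : StrictMonoOn f (Set.Ico (0:ℝ) 1) := by
    apply strictMonoOn_of_deriv_pos (convex_Ico 0 1) hcont
    rw [interior_Ico]
    exact hderiv
  intro x hx
  have h0 : f 0 < f x := hmono (by constructor <;> norm_num)
    ⟨le_of_lt hx.1, hx.2⟩ hx.1
  have hf0 : f 0 = 0 := by simp [hf]
  rw [hf0] at h0
  simp only [hf] at h0
  linarith

lemma log_gt {t : ℝ} (ht : 1 < t) : 2 / t < Real.log ((t + 1) / (t - 1)) := by
  have ht0 : 0 < t := by linarith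
  have hx : (1 : ℝ) / t ∈ Set.Ioo (0:ℝ) 1 := by
    constructor
    · positivity
    · rw [div_lt_one ht0]; linarith
  have h := log_aux (1 / t) hx
  have hrw : (t + 1) / (t - 1) = (1 + 1/t) / (1 - 1/t) := by
    have h1 : (0:ℝ) < 1 - 1/t := by linarith [hx.2]
    rw [div_eq_div_iff (by linarith) (by linarith)]
    field_simp
    try ring
  rw [hrw, Real.log_div (by nlinarith [hx.1] : (1:ℝ) + 1/t ≠ 0)
    (by nlinarith [hx.2] : (1:ℝ) - 1/t ≠ 0)]
  calc 2 / t = 2 * (1 / t) := by ring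
  _ < _ := h

/-- The core equivalence, stated in terms of `t = β²`. -/
lemma key_iff {t ρ : ℝ} (ht : 1 < t) :
    Real.sqrt ((t - 1) / (t + 1)) * Real.exp (ρ / (2 * t)) < 1 ↔
      ρ < t * Real.log ((t + 1) / (t - 1)) := by
  have ht0 : 0 < t := by linarith
  have ha : 0 < (t - 1) / (t + 1) := by
    apply div_pos <;> linarith
  have hs : 0 < Real.sqrt ((t - 1) / (t + 1)) := Real.sqrt_pos.mpr ha
  have hE : 0 < Real.exp (ρ / (2 * t)) := Real.exp_pos _
  have hsq : (Real.sqrt ((t - 1) / (t + 1)) * Real.exp (ρ / (2 * t))) ^ 2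
      = (t - 1) / (t + 1) * Real.exp (ρ / t) := by
    have htne : t ≠ 0 := ne_of_gt ht0
    rw [mul_pow, Real.sq_sqrt (le_of_lt ha), ← Real.exp_nat_mul]
    congr 2
    push_cast
    field_simp
    try ring
  have hiff : Real.sqrt ((t - 1) / (t + 1)) * Real.exp (ρ / (2 * t)) < 1 ↔
      (t - 1) / (t + 1) * Real.exp (ρ / t) < 1 := by
    rw [← hsq]
    constructor
    · intro h; nlinarith [mul_pos hs hE]
    · intro h; nlinarith [mul_pos hs hE]
  rw [hiff]
  have h2 : (t - 1) / (t + 1) * Real.exp (ρ / t) < 1 ↔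
      Real.exp (ρ / t) < (t + 1) / (t - 1) := by
    rw [mul_comm, ← lt_div_iff₀ ha, one_div_div]
  rw [h2, ← Real.lt_log_iff_exp_lt
    (div_pos (by linarith : (0:ℝ) < t + 1) (by linarith : (0:ℝ) < t - 1)),
    div_lt_iff₀ ht0, mul_comm]

lemma frac_eq {ε : ℝ} (hε : 0 < ε) :
    ε ^ 2 / (1 / 2 + δ2const ε + ε ^ 2) = (βconst ε ^ 2 - 1) / (βconst ε ^ 2 + 1) := by
  set t := βconst ε ^ 2 with htdef
  have htsq : t ^ 2 = 1 + 8 * ε ^ 2 := beta_sq_sq ε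
  have ht0 : 0 < t := pow_pos (beta_pos ε) 2
  have ht1 : 1 < t := by nlinarith
  have h8 : ε ^ 2 = (t ^ 2 - 1) / 8 := by linarith
  have hδ : δ2const ε = (t - 1) / 4 := rfl
  rw [hδ, h8]
  have hden : 1 / 2 + (t - 1) / 4 + (t ^ 2 - 1) / 8 = (t + 1) ^ 2 / 8 := by ring
  rw [hden]
  rw [div_eq_div_iff (by positivity) (by linarith)]
  field_simp
  ring

lemma beta_gt_one {ε : ℝ} (hε : 0 < ε) : 1 < βconst ε ^ 2 := by
  have htsq := beta_sq_sq ε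
  have h0 : 0 < βconst ε := beta_pos ε
  nlinarith

theorem stmt_7 (ρ : ℝ) :
    (∀ ε : ℝ, 0 < ε →
      Real.sqrt (ε ^ 2 / (1 / 2 + δ2const ε + ε ^ 2)) * Real.exp (ρ / (2 * βconst ε ^ 2))
        ∈ Set.Ioo (0 : ℝ) 1) ↔ ρ ≤ 2 := by
  constructor
  · -- assume the Ioo condition, prove ρ ≤ 2
    intro h
    by_contra hρ
    push_neg at hρ
    set t : ℝ := ρ / (ρ - 2) with htdef
    have hρ2 : 0 < ρ - 2 := by linarith
    have ht1 : 1 < t := by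
      rw [htdef, lt_div_iff₀ hρ2]; linarith
    set ε : ℝ := Real.sqrt ((t ^ 2 - 1) / 8) with hεdef
    have hεpos : 0 < ε := Real.sqrt_pos.mpr (by nlinarith)
    have hε2 : ε ^ 2 = (t ^ 2 - 1) / 8 := Real.sq_sqrt (by nlinarith)
    have hβ : βconst ε ^ 2 = t := by
      have h1 : (βconst ε ^ 2) ^ 2 = t ^ 2 := by
        rw [beta_sq_sq, hε2]; ring
      have h2 : 0 < βconst ε := beta_pos ε
      nlinarith
    have hmem := h ε hεpos
    rw [frac_eq hεpos, hβ] at hmem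
    have hlt := (key_iff ht1).mp hmem.2
    have hlog : Real.log ((t + 1) / (t - 1)) ≤ 2 / (t - 1) := by
      have h1 := Real.log_le_sub_one_of_pos
        (div_pos (by linarith : (0:ℝ) < t + 1) (by linarith : (0:ℝ) < t - 1))
      have hne : t - 1 ≠ 0 := by linarith
      have heq : (t + 1) / (t - 1) - 1 = 2 / (t - 1) := by
        field_simp
        norm_num
      linarith
    have ht0 : 0 < t := by linarith
    have hub : t * Real.log ((t + 1) / (t - 1)) ≤ t * (2 / (t - 1)) :=
      mul_le_mul_of_nonneg_left hlog (le_of_lt ht0)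
    have hval : t * (2 / (t - 1)) = ρ := by
      have hne : ρ - 2 ≠ 0 := ne_of_gt hρ2
      rw [htdef]
      have h1 : ρ / (ρ - 2) - 1 = 2 / (ρ - 2) := by
        field_simp
        ring
      rw [h1]
      have h2 : 2 / (2 / (ρ - 2)) = ρ - 2 := by
        rw [div_div_eq_mul_div]
        field_simp
      rw [h2]
      field_simp
    linarith
  · -- ρ ≤ 2 implies the Ioo condition
    intro hρ ε hε
    have ht1 := beta_gt_one hε
    set t := βconst ε ^ 2 with htdef
    have ht0 : 0 < t := by linarith
    rw [frac_eq hε]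
    constructor
    · have hfr : 0 < (t - 1) / (t + 1) := by
        apply div_pos <;> linarith
      exact mul_pos (Real.sqrt_pos.mpr hfr) (Real.exp_pos _)
    · rw [key_iff ht1]
      have hlg := log_gt ht1
      have htne : t ≠ 0 := ne_of_gt ht0
      calc ρ ≤ 2 := hρ
      _ = t * (2 / t) := by field_simp
      _ < t * Real.log ((t + 1) / (t - 1)) :=
          mul_lt_mul_of_pos_left hlg ht0
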